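/- Let X : [0,∞) → GL(n,ℝ), and let L, R : [0,∞) → GL(n,ℝ) be families of matrices such that ‖L(t)‖, ‖L(t)⁻¹‖, ‖R(t)‖, ‖R(t)⁻¹‖ are uniformly bounded in t. Then for each i, limsup_{t→∞} (1/t)·ln σ_i^o(L(t)·X(t)·R(t)) = limsup_{t→∞} (1/t)·ln σ_i^o(X(t)), provided the latter is finite. -/

import Mathlib

open Matrix Filter

/-- The k-th largest singular value (0-indexed) of a real square matrix:
square roots of the eigenvalues of `Xᵀ * X`, sorted in decreasing order. -/
noncomputable def svalDesc {n : ℕ} (X : Matrix (Fin n) (Fin n) ℝ) (k : Fin n) : ℝ :=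
  Real.sqrt (((show (Xᵀ * X).IsHermitian by
      simpa using Matrix.isHermitian_conjTranspose_mul_self X).eigenvalues ∘
    Tuple.sort ((show (Xᵀ * X).IsHermitian by
      simpa using Matrix.isHermitian_conjTranspose_mul_self X).eigenvalues)) k.rev)

/-- Euclidean norm of the j-th column of X. -/
noncomputable def colNorm {n : ℕ} (X : Matrix (Fin n) (Fin n) ℝ) (j : Fin n) : ℝ :=
  Real.sqrt (∑ i, (X i j) ^ 2)

namespace LyapAux

variable {n : ℕ}

lemma isHermitian_gram (X : Matrix (Fin n) (Fin n) ℝ) : (Xᵀ * X).IsHermitian := by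
  simpa using Matrix.isHermitian_conjTranspose_mul_self X

/-- eigenvalues of the Gram matrix -/
noncomputable def lam (X : Matrix (Fin n) (Fin n) ℝ) : Fin n → ℝ :=
  (isHermitian_gram X).eigenvalues

/-- eigenvalues of the Gram matrix, sorted in increasing order -/
noncomputable def evs (X : Matrix (Fin n) (Fin n) ℝ) : Fin n → ℝ :=
  lam X ∘ Tuple.sort (lam X)

lemma svalDesc_eq (X : Matrix (Fin n) (Fin n) ℝ) (k : Fin n) :
    svalDesc X k = Real.sqrt (evs X k.rev) := rfl

lemma evs_mono (X : Matrix (Fin n) (Fin n) ℝ) : Monotone (evs X) :=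
  Tuple.monotone_sort (lam X)

/-- orthonormal eigenvectors of the Gram matrix -/
noncomputable def u (X : Matrix (Fin n) (Fin n) ℝ) (j : Fin n) : Fin n → ℝ :=
  (WithLp.equiv 2 _) ((isHermitian_gram X).eigenvectorBasis j)

lemma gram_mulVec_u (X : Matrix (Fin n) (Fin n) ℝ) (j : Fin n) :
    (Xᵀ * X) *ᵥ u X j = lam X j • u X j :=
  (isHermitian_gram X).mulVec_eigenvectorBasis j

lemma u_dot_u (X : Matrix (Fin n) (Fin n) ℝ) (j k : Fin n) :
    u X j ⬝ᵥ u X k = if j = k then 1 else 0 := by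
  have h := orthonormal_iff_ite.mp
    (isHermitian_gram X).eigenvectorBasis.orthonormal (i := j) (j := k)
  rw [← h]
  simp [u, PiLp.inner_apply, RCLike.inner_apply, dotProduct, mul_comm]

lemma gram_dot (X : Matrix (Fin n) (Fin n) ℝ) (v : Fin n → ℝ) :
    v ⬝ᵥ ((Xᵀ * X) *ᵥ v) = (X *ᵥ v) ⬝ᵥ (X *ᵥ v) := by
  rw [← Matrix.mulVec_mulVec, Matrix.dotProduct_mulVec, Matrix.vecMul_transpose]

lemma dot_self_nonneg (v : Fin n → ℝ) : 0 ≤ v ⬝ᵥ v :=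
  Finset.sum_nonneg fun _ _ => mul_self_nonneg _

lemma dot_self_pos {v : Fin n → ℝ} (hv : v ≠ 0) : 0 < v ⬝ᵥ v := by
  rcases Function.ne_iff.mp hv with ⟨i, hi⟩
  exact Finset.sum_pos' (fun j _ => mul_self_nonneg _)
    ⟨i, Finset.mem_univ i, mul_self_pos.mpr hi⟩

lemma sum_dot (c : Fin n → ℝ) (w : Fin n → (Fin n → ℝ)) (x : Fin n → ℝ) :
    (∑ j, c j • w j) ⬝ᵥ x = ∑ j, c j * (w j ⬝ᵥ x) := by
  simp only [dotProduct, Finset.sum_apply, Pi.smul_apply, smul_eq_mul, Finset.sum_mul,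
    Finset.mul_sum]
  rw [Finset.sum_comm]
  exact Finset.sum_congr rfl fun _ _ => Finset.sum_congr rfl fun _ _ => by ring

lemma dot_sum (c : Fin n → ℝ) (w : Fin n → (Fin n → ℝ)) (x : Fin n → ℝ) :
    x ⬝ᵥ (∑ j, c j • w j) = ∑ j, c j * (x ⬝ᵥ w j) := by
  simp only [dotProduct, Finset.sum_apply, Pi.smul_apply, smul_eq_mul, Finset.sum_mul,
    Finset.mul_sum]
  rw [Finset.sum_comm]
  exact Finset.sum_congr rfl fun _ _ => Finset.sum_congr rfl fun _ _ => by ring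

lemma dot_expand (X : Matrix (Fin n) (Fin n) ℝ) (c d : Fin n → ℝ) :
    (∑ j, c j • u X j) ⬝ᵥ (∑ k, d k • u X k) = ∑ j, c j * d j := by
  rw [sum_dot]
  simp [dot_sum, u_dot_u, Finset.mul_sum, mul_ite]

lemma mulVec_sum' (G : Matrix (Fin n) (Fin n) ℝ) (d : Fin n → ℝ) (w : Fin n → (Fin n → ℝ)) :
    G *ᵥ (∑ k, d k • w k) = ∑ k, d k • (G *ᵥ w k) := by
  simp only [← Matrix.mulVecLin_apply, map_sum, _root_.map_smul]

lemma u_li (X : Matrix (Fin n) (Fin n) ℝ) : LinearIndependent ℝ (u X) := by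
  rw [Fintype.linearIndependent_iff]
  intro g hg j
  have h0 := dot_expand X g g
  rw [hg, zero_dotProduct] at h0
  have h1 := (Finset.sum_eq_zero_iff_of_nonneg
    (fun k (_ : k ∈ Finset.univ) => mul_self_nonneg (g k))).mp h0.symm
  exact mul_self_eq_zero.mp (h1 j (Finset.mem_univ j))

/-- span of a subfamily of the eigenvectors -/
noncomputable def spanU (X : Matrix (Fin n) (Fin n) ℝ) (S : Finset (Fin n)) :
    Submodule ℝ (Fin n → ℝ) :=
  Submodule.span ℝ (Set.range (fun k : ↥S => u X ↑k))

lemma finrank_spanU (X : Matrix (Fin n) (Fin n) ℝ) (S : Finset (Fin n)) :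
    Module.finrank ℝ (spanU X S) = S.card := by
  rw [spanU]
  exact (finrank_span_eq_card ((u_li X).comp _ Subtype.val_injective)).trans
    (Fintype.card_coe S)

lemma repr_of_mem_spanU (X : Matrix (Fin n) (Fin n) ℝ) (S : Finset (Fin n))
    {v : Fin n → ℝ} (hv : v ∈ spanU X S) :
    ∃ c : Fin n → ℝ, (∀ j ∉ S, c j = 0) ∧ v = ∑ j, c j • u X j := by
  obtain ⟨f, hf⟩ := (Submodule.mem_span_range_iff_exists_fun ℝ).mp hv
  classical
  refine ⟨fun j => if h : j ∈ S then f ⟨j, h⟩ else 0, fun j hj => by simp [hj], ?_⟩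
  rw [← hf]
  rw [show (∑ j, (if h : j ∈ S then f ⟨j, h⟩ else 0) • u X j)
      = ∑ j ∈ S, (if h : j ∈ S then f ⟨j, h⟩ else 0) • u X j from
    (Finset.sum_subset (Finset.subset_univ S) (fun j _ hj => by simp [hj])).symm]
  rw [← Finset.sum_attach S (fun j => (if h : j ∈ S then f ⟨j, h⟩ else 0) • u X j)]
  exact Finset.sum_congr rfl fun k _ => by simp [k.2]

lemma quad_eval (X : Matrix (Fin n) (Fin n) ℝ) (c : Fin n → ℝ) :
    (∑ j, c j • u X j) ⬝ᵥ ((Xᵀ * X) *ᵥ (∑ j, c j • u X j))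
      = ∑ j, lam X j * (c j * c j) := by
  rw [mulVec_sum']
  have : ∀ j, c j • ((Xᵀ * X) *ᵥ u X j) = (c j * lam X j) • u X j := by
    intro j; rw [gram_mulVec_u, smul_smul]
  simp_rw [this]
  rw [dot_expand]
  exact Finset.sum_congr rfl fun j _ => by ring

lemma quad_le_on_spanU (X : Matrix (Fin n) (Fin n) ℝ) (S : Finset (Fin n)) (c : ℝ)
    (h : ∀ j ∈ S, lam X j ≤ c) :
    ∀ v ∈ spanU X S, v ⬝ᵥ ((Xᵀ * X) *ᵥ v) ≤ c * (v ⬝ᵥ v) := by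
  intro v hv
  obtain ⟨cc, hcc0, rfl⟩ := repr_of_mem_spanU X S hv
  rw [quad_eval, dot_expand, Finset.mul_sum]
  refine Finset.sum_le_sum fun j _ => ?_
  by_cases hj : j ∈ S
  · nlinarith [h j hj, mul_self_nonneg (cc j)]
  · simp [hcc0 j hj]

lemma quad_ge_on_spanU (X : Matrix (Fin n) (Fin n) ℝ) (S : Finset (Fin n)) (c : ℝ)
    (h : ∀ j ∈ S, c ≤ lam X j) :
    ∀ v ∈ spanU X S, c * (v ⬝ᵥ v) ≤ v ⬝ᵥ ((Xᵀ * X) *ᵥ v) := by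
  intro v hv
  obtain ⟨cc, hcc0, rfl⟩ := repr_of_mem_spanU X S hv
  rw [quad_eval, dot_expand, Finset.mul_sum]
  refine Finset.sum_le_sum fun j _ => ?_
  by_cases hj : j ∈ S
  · nlinarith [h j hj, mul_self_nonneg (cc j)]
  · simp [hcc0 j hj]

lemma u_ne_zero (X : Matrix (Fin n) (Fin n) ℝ) (j : Fin n) : u X j ≠ 0 := by
  intro h
  have := u_dot_u X j j
  rw [h] at this
  simp at this

lemma lam_nonneg (X : Matrix (Fin n) (Fin n) ℝ) (j : Fin n) : 0 ≤ lam X j := by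
  have h := gram_dot X (u X j)
  rw [gram_mulVec_u, dotProduct_smul] at h
  have h2 : u X j ⬝ᵥ u X j = 1 := by simp [u_dot_u]
  rw [h2] at h
  have := dot_self_nonneg (X *ᵥ u X j)
  simpa [← h] using this

lemma lam_pos (X : Matrix (Fin n) (Fin n) ℝ) (hX : IsUnit X.det) (j : Fin n) :
    0 < lam X j := by
  rcases (lam_nonneg X j).lt_or_eq with h | h
  · exact h
  · exfalso
    have h1 := gram_dot X (u X j)
    rw [gram_mulVec_u, ← h, zero_smul, dotProduct_zero] at h1
    have h2 : X *ᵥ u X j = 0 := by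
      by_contra h2
      exact absurd h1.symm (ne_of_gt (dot_self_pos h2))
    have h3 : u X j = 0 := by
      have := congrArg (fun w => X⁻¹ *ᵥ w) h2
      simpa [Matrix.mulVec_mulVec, Matrix.nonsing_inv_mul X hX] using this
    exact u_ne_zero X j h3

lemma evs_nonneg (X : Matrix (Fin n) (Fin n) ℝ) (k : Fin n) : 0 ≤ evs X k :=
  lam_nonneg X _

lemma evs_pos (X : Matrix (Fin n) (Fin n) ℝ) (hX : IsUnit X.det) (k : Fin n) :
    0 < evs X k := lam_pos X hX _

/-- Key upper bound: if there is a subspace of dimension ≥ n - i on which the quadratic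
form of the Gram matrix of `M` is bounded by `c`, then the (i+1)-th largest eigenvalue
of the Gram matrix is at most `c`. -/
lemma key_upper (M : Matrix (Fin n) (Fin n) ℝ) (i : Fin n) (c : ℝ)
    (W : Submodule ℝ (Fin n → ℝ)) (hrank : n ≤ Module.finrank ℝ W + i.1)
    (hq : ∀ v ∈ W, v ⬝ᵥ ((Mᵀ * M) *ᵥ v) ≤ c * (v ⬝ᵥ v)) :
    evs M i.rev ≤ c := by
  classical
  set σ := Tuple.sort (lam M) with hσ
  set S := (Finset.Ici i.rev).image σ with hS
  set V := spanU M S with hV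
  have hcard : S.card = i.1 + 1 := by
    rw [hS, Finset.card_image_of_injective _ σ.injective, Fin.card_Ici, Fin.val_rev]
    have := i.isLt; omega
  have hVrank : Module.finrank ℝ V = i.1 + 1 := by rw [hV, finrank_spanU, hcard]
  have hsum := Submodule.finrank_sup_add_finrank_inf_eq V W
  have htop : Module.finrank ℝ ↥(V ⊔ W) ≤ n := by
    refine le_trans (Submodule.finrank_le _) ?_
    simp [Module.finrank_pi]
  have hpos : V ⊓ W ≠ ⊥ := by
    intro hbot
    rw [hbot, finrank_bot] at hsum
    omega
  obtain ⟨v, hvVW, hv0⟩ := Submodule.exists_mem_ne_zero_of_ne_bot hpos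
  have h1 : evs M i.rev * (v ⬝ᵥ v) ≤ v ⬝ᵥ ((Mᵀ * M) *ᵥ v) := by
    refine quad_ge_on_spanU M S _ ?_ v hvVW.1
    intro j hj
    rw [hS, Finset.mem_image] at hj
    obtain ⟨k, hk, rfl⟩ := hj
    exact evs_mono M (Finset.mem_Ici.mp hk)
  have h2 := hq v hvVW.2
  have h3 := dot_self_pos hv0
  nlinarith

/-- The bottom n - i eigenvectors give a subspace where the quadratic form is
bounded above by `evs X i.rev`. -/
lemma bottom_subspace (X : Matrix (Fin n) (Fin n) ℝ) (i : Fin n) :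
    ∃ W : Submodule ℝ (Fin n → ℝ), n ≤ Module.finrank ℝ W + i.1 ∧
      ∀ v ∈ W, v ⬝ᵥ ((Xᵀ * X) *ᵥ v) ≤ evs X i.rev * (v ⬝ᵥ v) := by
  classical
  set σ := Tuple.sort (lam X) with hσ
  refine ⟨spanU X ((Finset.Iic i.rev).image σ), ?_, ?_⟩
  · rw [finrank_spanU, Finset.card_image_of_injective _ σ.injective, Fin.card_Iic, Fin.val_rev]
    have := i.isLt; omega
  · refine quad_le_on_spanU X _ _ ?_
    intro j hj
    rw [Finset.mem_image] at hj
    obtain ⟨k, hk, rfl⟩ := hj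
    exact evs_mono X (Finset.mem_Iic.mp hk)

lemma evs_triple_le (S X T : Matrix (Fin n) (Fin n) ℝ) (hT : IsUnit T.det)
    (Cs Ct : ℝ) (hCs : 0 ≤ Cs)
    (hSb : ∀ v, (S *ᵥ v) ⬝ᵥ (S *ᵥ v) ≤ Cs * (v ⬝ᵥ v))
    (hTb : ∀ v, (T *ᵥ v) ⬝ᵥ (T *ᵥ v) ≤ Ct * (v ⬝ᵥ v)) (i : Fin n) :
    evs (S * X * T) i.rev ≤ Cs * Ct * evs X i.rev := by
  obtain ⟨W0, hW0rank, hW0⟩ := bottom_subspace X i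
  let e : (Fin n → ℝ) ≃ₗ[ℝ] (Fin n → ℝ) :=
    LinearEquiv.ofLinear (Matrix.mulVecLin T⁻¹) (Matrix.mulVecLin T)
      (by rw [← Matrix.mulVecLin_mul, Matrix.nonsing_inv_mul T hT, Matrix.mulVecLin_one])
      (by rw [← Matrix.mulVecLin_mul, Matrix.mul_nonsing_inv T hT, Matrix.mulVecLin_one])
  refine key_upper (S * X * T) i _ (Submodule.map (e : (Fin n → ℝ) →ₗ[ℝ] (Fin n → ℝ)) W0) ?_ ?_
  · rw [LinearEquiv.finrank_map_eq]; exact hW0rank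
  · intro v hv
    obtain ⟨w, hw, hwv⟩ := hv
    have hTv : T *ᵥ v = w := by
      have : v = T⁻¹ *ᵥ w := by
        rw [← hwv]; rfl
      rw [this, Matrix.mulVec_mulVec, Matrix.mul_nonsing_inv T hT, Matrix.one_mulVec]
    have e1 : (S * X * T) *ᵥ v = S *ᵥ (X *ᵥ w) := by
      rw [← hTv, ← Matrix.mulVec_mulVec, ← Matrix.mulVec_mulVec]
    rw [gram_dot, e1]
    have h2 : (X *ᵥ w) ⬝ᵥ (X *ᵥ w) = w ⬝ᵥ ((Xᵀ * X) *ᵥ w) := (gram_dot X w).symm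
    have h3 := hW0 w hw
    have h4 : w ⬝ᵥ w ≤ Ct * (v ⬝ᵥ v) := by rw [← hTv]; exact hTb v
    have h5 := hSb (X *ᵥ w)
    have h6 : 0 ≤ evs X i.rev := evs_nonneg X _
    calc (S *ᵥ (X *ᵥ w)) ⬝ᵥ (S *ᵥ (X *ᵥ w)) ≤ Cs * ((X *ᵥ w) ⬝ᵥ (X *ᵥ w)) := h5
      _ = Cs * (w ⬝ᵥ ((Xᵀ * X) *ᵥ w)) := by rw [h2]
      _ ≤ Cs * (evs X i.rev * (w ⬝ᵥ w)) := mul_le_mul_of_nonneg_left h3 hCs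
      _ ≤ Cs * (evs X i.rev * (Ct * (v ⬝ᵥ v))) :=
          mul_le_mul_of_nonneg_left (mul_le_mul_of_nonneg_left h4 h6) hCs
      _ = Cs * Ct * evs X i.rev * (v ⬝ᵥ v) := by ring

lemma sval_triple_le (S X T : Matrix (Fin n) (Fin n) ℝ) (hT : IsUnit T.det)
    (Cs Ct : ℝ) (hCs : 0 ≤ Cs) (hCt : 0 ≤ Ct)
    (hSb : ∀ v, (S *ᵥ v) ⬝ᵥ (S *ᵥ v) ≤ Cs * (v ⬝ᵥ v))
    (hTb : ∀ v, (T *ᵥ v) ⬝ᵥ (T *ᵥ v) ≤ Ct * (v ⬝ᵥ v)) (i : Fin n) :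
    svalDesc (S * X * T) i ≤ Real.sqrt (Cs * Ct) * svalDesc X i := by
  rw [svalDesc_eq, svalDesc_eq, ← Real.sqrt_mul (by positivity)]
  exact Real.sqrt_le_sqrt (evs_triple_le S X T hT Cs Ct hCs hSb hTb i)

lemma sval_pos (X : Matrix (Fin n) (Fin n) ℝ) (hX : IsUnit X.det) (i : Fin n) :
    0 < svalDesc X i := by
  rw [svalDesc_eq]
  exact Real.sqrt_pos.mpr (evs_pos X hX _)

lemma entry_quad (M : Matrix (Fin n) (Fin n) ℝ) (c : ℝ) (hc : 0 ≤ c)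
    (h : ∀ i j, |M i j| ≤ c) (v : Fin n → ℝ) :
    (M *ᵥ v) ⬝ᵥ (M *ᵥ v) ≤ ((n : ℝ) ^ 2 * c ^ 2) * (v ⬝ᵥ v) := by
  have habs : ∀ i, |(M *ᵥ v) i| ≤ c * ∑ j, |v j| := by
    intro i
    calc |(M *ᵥ v) i| = |∑ j, M i j * v j| := rfl
      _ ≤ ∑ j, |M i j * v j| := Finset.abs_sum_le_sum_abs _ _
      _ ≤ ∑ j, c * |v j| := Finset.sum_le_sum fun j _ => by
          rw [abs_mul]; exact mul_le_mul_of_nonneg_right (h i j) (abs_nonneg _)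
      _ = c * ∑ j, |v j| := (Finset.mul_sum _ _ _).symm
  have hsq : (∑ j, |v j|) ^ 2 ≤ (n : ℝ) * ∑ j, v j ^ 2 := by
    have := sq_sum_le_card_mul_sum_sq (s := (Finset.univ : Finset (Fin n)))
      (f := fun j => |v j|)
    simpa [sq_abs] using this
  have hrow : ∀ i, (M *ᵥ v) i ^ 2 ≤ c ^ 2 * ((n : ℝ) * ∑ j, v j ^ 2) := by
    intro i
    have h1 : (M *ᵥ v) i ^ 2 ≤ (c * ∑ j, |v j|) ^ 2 := by
      rw [← sq_abs]
      exact pow_le_pow_left₀ (abs_nonneg _) (habs i) 2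
    have h2 : (c * ∑ j, |v j|) ^ 2 = c ^ 2 * (∑ j, |v j|) ^ 2 := by ring
    nlinarith [sq_nonneg c]
  have hvv : v ⬝ᵥ v = ∑ j, v j ^ 2 := by simp [dotProduct, sq]
  calc (M *ᵥ v) ⬝ᵥ (M *ᵥ v) = ∑ i, (M *ᵥ v) i ^ 2 := by simp [dotProduct, sq]
    _ ≤ ∑ _i : Fin n, c ^ 2 * ((n : ℝ) * ∑ j, v j ^ 2) := Finset.sum_le_sum fun i _ => hrow i
    _ = (n : ℝ) * (c ^ 2 * ((n : ℝ) * ∑ j, v j ^ 2)) := by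
        rw [Finset.sum_const, Finset.card_univ, Fintype.card_fin, nsmul_eq_mul]
    _ = ((n : ℝ) ^ 2 * c ^ 2) * (v ⬝ᵥ v) := by rw [hvv]; ring

lemma limsup_eq_of_close (f g : ℝ → ℝ) {l : ℝ}
    (hfl : limsup (fun t => ((f t : ℝ) : EReal)) atTop = (l : EReal))
    (hclose : ∀ ε : ℝ, 0 < ε → ∀ᶠ t in atTop, |g t - f t| ≤ ε) :
    limsup (fun t => ((g t : ℝ) : EReal)) atTop = (l : EReal) := by
  have hup : ∀ ε : ℝ, 0 < ε →
      limsup (fun t => ((g t : ℝ) : EReal)) atTop ≤ ((l + 2 * ε : ℝ) : EReal) := by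
    intro ε hε
    have h1 : limsup (fun t => ((f t : ℝ) : EReal)) atTop < ((l + ε : ℝ) : EReal) := by
      rw [hfl]; exact_mod_cast (by linarith : l < l + ε)
    have h2 := eventually_lt_of_limsup_lt h1
    refine limsup_le_of_le (by isBoundedDefault) ?_
    filter_upwards [h2, hclose ε hε] with t ht2 htc
    have hf : f t < l + ε := by exact_mod_cast ht2
    have habs := abs_le.mp htc
    have : g t ≤ l + 2 * ε := by linarith
    exact_mod_cast this
  have hdn : ∀ ε : ℝ, 0 < ε →
      ((l - 2 * ε : ℝ) : EReal) ≤ limsup (fun t => ((g t : ℝ) : EReal)) atTop := by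
    intro ε hε
    have h1 : ((l - ε : ℝ) : EReal) < limsup (fun t => ((f t : ℝ) : EReal)) atTop := by
      rw [hfl]; exact_mod_cast (by linarith : l - ε < l)
    have h2 := frequently_lt_of_lt_limsup (by isBoundedDefault) h1
    have h3 : ∃ᶠ t in atTop, ((l - 2 * ε : ℝ) : EReal) ≤ (g t : EReal) := by
      refine (h2.and_eventually (hclose ε hε)).mono ?_
      rintro t ⟨ht1, ht2⟩
      have hf : l - ε < f t := by exact_mod_cast ht1
      have habs := abs_le.mp ht2
      exact_mod_cast (by linarith : l - 2 * ε ≤ g t)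
    exact le_limsup_of_frequently_le h3
  refine le_antisymm ?_ ?_
  · refine le_of_forall_gt fun b hb => ?_
    obtain ⟨x, hx1, hx2⟩ := EReal.lt_iff_exists_real_btwn.mp hb
    have hx1' : l < x := by exact_mod_cast hx1
    have := hup ((x - l) / 2) (by linarith)
    rw [(by ring : l + 2 * ((x - l) / 2) = x)] at this
    exact lt_of_le_of_lt this hx2
  · refine le_of_forall_lt fun b hb => ?_
    obtain ⟨x, hx1, hx2⟩ := EReal.lt_iff_exists_real_btwn.mp hb
    have hx2' : x < l := by exact_mod_cast hx2
    have := hdn ((l - x) / 2) (by linarith)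
    rw [(by ring : l - 2 * ((l - x) / 2) = x)] at this
    exact lt_of_lt_of_le hx1 this

end LyapAux


/-- Invariance of Lyapunov exponents under Lyapunov transformations:
if L(t), L(t)⁻¹, R(t), R(t)⁻¹ are uniformly bounded families of invertible matrices,
then L(t)·X(t)·R(t) has the same Lyapunov exponents as X(t). -/
theorem LE_invariant_Lyapunov_transformation {n : ℕ}
    (X L R : ℝ → Matrix (Fin n) (Fin n) ℝ)
    (hX : ∀ t, IsUnit (X t).det) (hL : ∀ t, IsUnit (L t).det) (hR : ∀ t, IsUnit (R t).det)
    (hbound : ∃ c : ℝ, ∀ t i j,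
      |L t i j| ≤ c ∧ |(L t)⁻¹ i j| ≤ c ∧ |R t i j| ≤ c ∧ |(R t)⁻¹ i j| ≤ c)
    (i : Fin n)
    (hfin : ∃ l : ℝ,
      limsup (fun t : ℝ => (((1 / t) * Real.log (svalDesc (X t) i) : ℝ) : EReal)) atTop
        = (l : EReal)) :
    limsup (fun t : ℝ =>
        (((1 / t) * Real.log (svalDesc (L t * X t * R t) i) : ℝ) : EReal)) atTop =
    limsup (fun t : ℝ => (((1 / t) * Real.log (svalDesc (X t) i) : ℝ) : EReal)) atTop := by
  classical
  obtain ⟨l, hl⟩ := hfin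
  obtain ⟨c0, hc⟩ := hbound
  set c : ℝ := max c0 0 with hcdef
  have hc0 : (0:ℝ) ≤ c := le_max_right _ _
  have hcL : ∀ t a b, |L t a b| ≤ c := fun t a b => le_trans (hc t a b).1 (le_max_left _ _)
  have hcLi : ∀ t a b, |(L t)⁻¹ a b| ≤ c := fun t a b => ((hc t a b).2.1).trans (le_max_left _ _)
  have hcR : ∀ t a b, |R t a b| ≤ c := fun t a b => ((hc t a b).2.2.1).trans (le_max_left _ _)
  have hcRi : ∀ t a b, |(R t)⁻¹ a b| ≤ c :=
    fun t a b => ((hc t a b).2.2.2).trans (le_max_left _ _)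
  set Cb : ℝ := (n:ℝ)^2 * c^2 with hCbdef
  have hCb : 0 ≤ Cb := by positivity
  have hup : ∀ t, svalDesc (L t * X t * R t) i ≤ Cb * svalDesc (X t) i := by
    intro t
    have := LyapAux.sval_triple_le (L t) (X t) (R t) (hR t) Cb Cb hCb hCb
      (fun v => LyapAux.entry_quad (L t) c hc0 (hcL t) v)
      (fun v => LyapAux.entry_quad (R t) c hc0 (hcR t) v) i
    rwa [Real.sqrt_mul_self hCb] at this
  have hdown : ∀ t, svalDesc (X t) i ≤ Cb * svalDesc (L t * X t * R t) i := by
    intro t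
    have hXt : (L t)⁻¹ * (L t * X t * R t) * (R t)⁻¹ = X t := by
      have h1 : (L t)⁻¹ * (L t * X t * R t) = X t * R t := by
        rw [show L t * X t * R t = L t * (X t * R t) from by rw [Matrix.mul_assoc],
          ← Matrix.mul_assoc, Matrix.nonsing_inv_mul _ (hL t), Matrix.one_mul]
      rw [h1, Matrix.mul_assoc, Matrix.mul_nonsing_inv _ (hR t), Matrix.mul_one]
    have := LyapAux.sval_triple_le (L t)⁻¹ (L t * X t * R t) (R t)⁻¹
      (Matrix.isUnit_nonsing_inv_det _ (hR t)) Cb Cb hCb hCb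
      (fun v => LyapAux.entry_quad ((L t)⁻¹) c hc0 (hcLi t) v)
      (fun v => LyapAux.entry_quad ((R t)⁻¹) c hc0 (hcRi t) v) i
    rwa [hXt, Real.sqrt_mul_self hCb] at this
  have hspos : ∀ t, 0 < svalDesc (X t) i := fun t => LyapAux.sval_pos (X t) (hX t) i
  have hK1 : 1 ≤ Cb := by
    have hss : svalDesc (X 0) i ≤ Cb * (Cb * svalDesc (X 0) i) :=
      le_trans (hdown 0) (mul_le_mul_of_nonneg_left (hup 0) hCb)
    have hCb2 : 1 ≤ Cb ^ 2 := by nlinarith [hspos 0]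
    nlinarith [hCb2, hCb]
  have hCbpos : (0:ℝ) < Cb := lt_of_lt_of_le one_pos hK1
  have hs'pos : ∀ t, 0 < svalDesc (L t * X t * R t) i := by
    intro t
    nlinarith [lt_of_lt_of_le (hspos t) (hdown t), hCbpos]
  set B : ℝ := Real.log Cb with hBdef
  have hB0 : 0 ≤ B := Real.log_nonneg hK1
  have hlog : ∀ t,
      |Real.log (svalDesc (L t * X t * R t) i) - Real.log (svalDesc (X t) i)| ≤ B := by
    intro t
    have l1 : Real.log (svalDesc (L t * X t * R t) i)
        ≤ B + Real.log (svalDesc (X t) i) := by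
      have h := Real.log_le_log (hs'pos t) (hup t)
      rwa [Real.log_mul (ne_of_gt hCbpos) (ne_of_gt (hspos t))] at h
    have l2 : Real.log (svalDesc (X t) i)
        ≤ B + Real.log (svalDesc (L t * X t * R t) i) := by
      have h := Real.log_le_log (hspos t) (hdown t)
      rwa [Real.log_mul (ne_of_gt hCbpos) (ne_of_gt (hs'pos t))] at h
    rw [abs_le]
    constructor <;> linarith
  rw [hl]
  refine LyapAux.limsup_eq_of_close
    (fun t => (1 / t) * Real.log (svalDesc (X t) i))
    (fun t => (1 / t) * Real.log (svalDesc (L t * X t * R t) i)) hl ?_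
  intro eps heps
  rw [eventually_atTop]
  refine ⟨max 1 (B / eps), fun t ht => ?_⟩
  have ht1 : (1:ℝ) ≤ t := le_trans (le_max_left _ _) ht
  have htB : B / eps ≤ t := le_trans (le_max_right _ _) ht
  have htpos : (0:ℝ) < t := lt_of_lt_of_le one_pos ht1
  have key : 1 / t * Real.log (svalDesc (L t * X t * R t) i)
      - 1 / t * Real.log (svalDesc (X t) i)
      = 1 / t * (Real.log (svalDesc (L t * X t * R t) i)
        - Real.log (svalDesc (X t) i)) := by ring
  rw [key, abs_mul, abs_of_pos (by positivity : (0:ℝ) < 1 / t)]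
  have h2 : 1 / t * B ≤ eps := by
    rw [div_mul_eq_mul_div, one_mul, div_le_iff₀ htpos]
    calc B = eps * (B / eps) := by field_simp
      _ ≤ eps * t := mul_le_mul_of_nonneg_left htB (le_of_lt heps)
  calc 1 / t * |Real.log (svalDesc (L t * X t * R t) i)
        - Real.log (svalDesc (X t) i)|
      ≤ 1 / t * B := mul_le_mul_of_nonneg_left (hlog t) (by positivity)
    _ ≤ eps := h2
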